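/- Let α be a confluent continuous partial action of a monoid M on a T1 topological space X, with topological globalization Y. Then Y is T1 if and only if u⁻¹[{x}] is closed in X for every u ∈ M and every x ∈ X. -/

import Mathlib

/-- One-step reduction on words over `G` induced by the rules `R` of a monoid
presentation `⟨G|R⟩`. -/
def MStep {G : Type*} (R : List G → List G → Prop) : List G → List G → Prop :=
  fun w₁ w₂ => ∃ a l r b : List G, R l r ∧ w₁ = a ++ l ++ b ∧ w₂ = a ++ r ++ b

/-- One-step reduction on `G* × X` for a confluent partial action: either
rewrite the word via `R`, or let the last (rightmost, acting first) generator
act on the point. -/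
def PStep {G X : Type*} (R : List G → List G → Prop) (act : G → X → Option X) :
    List G × X → List G × X → Prop := fun p q =>
  (MStep R p.1 q.1 ∧ p.2 = q.2) ∨
  (∃ (w : List G) (g : G) (y : X),
    p.1 = w ++ [g] ∧ act g p.2 = some y ∧ q.1 = w ∧ q.2 = y)

/-- The globalization `Y` of a confluent partial action: the quotient of
`G* × X` by the equivalence generated by the one-step reduction `PStep`. -/
def PGlob {G X : Type*} (R : List G → List G → Prop) (act : G → X → Option X) : Type _ :=
  Quot (Relation.EqvGen (PStep R act))

/-- The class of `(w, x)` in the globalization. -/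
def PGlob.mk {G X : Type*} (R : List G → List G → Prop) (act : G → X → Option X)
    (p : List G × X) : PGlob R act :=
  Quot.mk _ p

/-- The topological globalization: the final topology with respect to all the
maps `x ↦ [w, x]`, `w` a word over `G`. -/
instance {G X : Type*} (R : List G → List G → Prop) (act : G → X → Option X)
    [t : TopologicalSpace X] : TopologicalSpace (PGlob R act) :=
  ⨆ w : List G, TopologicalSpace.coinduced (fun x : X => PGlob.mk R act (w, x)) t

open Relation

section Aux
variable {G X : Type*} {R : List G → List G → Prop} {act : G → X → Option X}

theorem mstep_append_right {u₁ u₂ s : List G} (h : MStep R u₁ u₂) :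
    MStep R (u₁ ++ s) (u₂ ++ s) := by
  obtain ⟨a, l, r, b, hR, h1, h2⟩ := h
  exact ⟨a, l, r, b ++ s, hR, by simp [h1], by simp [h2]⟩

theorem mstep_rt_append_right {u₁ u₂ s : List G}
    (h : ReflTransGen (MStep R) u₁ u₂) :
    ReflTransGen (MStep R) (u₁ ++ s) (u₂ ++ s) := by
  induction h with
  | refl => exact .refl
  | tail _ h ih => exact ih.tail (mstep_append_right h)

theorem pstep_of_mstep {w₁ w₂ : List G} {x : X} (h : MStep R w₁ w₂) :
    PStep R act (w₁, x) (w₂, x) := Or.inl ⟨h, rfl⟩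

theorem pstep_rt_of_mstep_rt {w₁ w₂ : List G} {x : X}
    (h : ReflTransGen (MStep R) w₁ w₂) :
    ReflTransGen (PStep R act) (w₁, x) (w₂, x) := by
  induction h with
  | refl => exact .refl
  | tail _ h ih => exact ih.tail (pstep_of_mstep h)

theorem pstep_prepend {v : List G} {p q : List G × X} (h : PStep R act p q) :
    PStep R act (v ++ p.1, p.2) (v ++ q.1, q.2) := by
  rcases h with ⟨hm, he⟩ | ⟨w, g, y, h1, h2, h3, h4⟩
  · obtain ⟨a, l, r, b, hR, e1, e2⟩ := hm
    exact Or.inl ⟨⟨v ++ a, l, r, b, hR, by simp [e1], by simp [e2]⟩, he⟩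
  · exact Or.inr ⟨v ++ w, g, y, by simp [h1], h2, by simp [h3], h4⟩

theorem pstep_rt_prepend {v : List G} {p q : List G × X}
    (h : ReflTransGen (PStep R act) p q) :
    ReflTransGen (PStep R act) (v ++ p.1, p.2) (v ++ q.1, q.2) := by
  induction h with
  | refl => exact .refl
  | tail _ h ih => exact ih.tail (pstep_prepend h)

/-- Standardization: a reduction of `(w, x')` to `(v, x)` factors as word
rewriting `w →* v ++ p` followed by the action of `p`. -/
theorem reach_decomp {v : List G} {x : X} {q : List G × X}
    (h : ReflTransGen (PStep R act) q (v, x)) :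
    ∃ p, ReflTransGen (MStep R) q.1 (v ++ p) ∧
      ReflTransGen (PStep R act) (p, q.2) ([], x) := by
  induction h using ReflTransGen.head_induction_on with
  | refl => exact ⟨[], by rw [List.append_nil], .refl⟩
  | head h' _ ih =>
    rename_i a c
    obtain ⟨p, hp1, hp2⟩ := ih
    rcases h' with ⟨hm, he⟩ | ⟨w', g, y, h1, h2, h3, h4⟩
    · exact ⟨p, .head hm hp1, by rwa [he]⟩
    · refine ⟨p ++ [g], ?_, ?_⟩
      · rw [h1, ← List.append_assoc]
        exact mstep_rt_append_right (h3 ▸ hp1)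
      · refine ReflTransGen.head (b := (p, y)) (Or.inr ⟨p, g, y, rfl, h2, rfl, rfl⟩) ?_
        rw [h4] at hp2; exact hp2

theorem reach_comp {v p w : List G} {x x' : X}
    (h1 : ReflTransGen (MStep R) w (v ++ p))
    (h2 : ReflTransGen (PStep R act) (p, x') ([], x)) :
    ReflTransGen (PStep R act) (w, x') (v, x) := by
  refine (pstep_rt_of_mstep_rt h1).trans ?_
  have := pstep_rt_prepend (v := v) h2
  simpa using this

theorem no_nil_rule (hnoeth : WellFounded (fun w₁ w₂ : List G => MStep R w₂ w₁))
    {r : List G} : ¬ R [] r := by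
  intro hr
  set f : ℕ → List G := fun n => (List.replicate n r).flatten with hf
  have hstep : ∀ n, MStep R (f n) (f (n + 1)) := by
    intro n
    refine ⟨f n, [], r, [], hr, by simp, ?_⟩
    simp [hf, List.replicate_succ' (n := n)]
  obtain ⟨a, ⟨n, rfl⟩, hmin⟩ := hnoeth.has_min (Set.range f) ⟨f 0, 0, rfl⟩
  exact hmin (f (n + 1)) ⟨n + 1, rfl⟩ (hstep n)

theorem nil_normal (hnoeth : WellFounded (fun w₁ w₂ : List G => MStep R w₂ w₁))
    (x : X) : ∀ q, ¬ PStep R act ([], x) q := by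
  rintro q (⟨⟨a, l, r, b, hR, h1, -⟩, -⟩ | ⟨w', g, y, h1, -⟩)
  · obtain ⟨rfl, rfl, rfl⟩ : a = [] ∧ l = [] ∧ b = [] := by
      simpa [List.append_eq_nil_iff] using h1.symm
    exact no_nil_rule hnoeth hR
  · simp at h1

theorem rt_of_normal {q t : List G × X} (hq : ∀ q', ¬ PStep R act q q')
    (h : ReflTransGen (PStep R act) q t) : t = q := by
  induction h using ReflTransGen.head_induction_on with
  | refl => rfl
  | head h' _ _ => exact absurd h' (hq _)

theorem eqvGen_iff_join
    (hconfP : ∀ p q₁ q₂ : List G × X, Relation.ReflTransGen (PStep R act) p q₁ →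
      Relation.ReflTransGen (PStep R act) p q₂ →
      ∃ t, Relation.ReflTransGen (PStep R act) q₁ t ∧
        Relation.ReflTransGen (PStep R act) q₂ t)
    {a b : List G × X} :
    EqvGen (PStep R act) a b ↔ Join (ReflTransGen (PStep R act)) a b := by
  constructor
  · intro h
    induction h with
    | rel a b h => exact ⟨b, .single h, .refl⟩
    | refl a => exact ⟨a, .refl, .refl⟩
    | symm a b _ ih => exact ⟨ih.choose, ih.choose_spec.2, ih.choose_spec.1⟩
    | trans a b c _ _ ih₁ ih₂ =>
      obtain ⟨d₁, h₁, h₂⟩ := ih₁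
      obtain ⟨d₂, h₃, h₄⟩ := ih₂
      obtain ⟨e, h₅, h₆⟩ := hconfP b d₁ d₂ h₂ h₃
      exact ⟨e, h₁.trans h₅, h₄.trans h₆⟩
  · rintro ⟨d, h₁, h₂⟩
    have conv : ∀ {a b : List G × X}, ReflTransGen (PStep R act) a b →
        EqvGen (PStep R act) a b := by
      intro a b h
      induction h with
      | refl => exact .refl _
      | tail _ h ih => exact .trans _ _ _ ih (.rel _ _ h)
    exact .trans _ _ _ (conv h₁) (.symm _ _ (conv h₂))

end Aux

section Aux2
variable {G X : Type*} {R : List G → List G → Prop} {act : G → X → Option X}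
open Relation

theorem mstep_normal_form (hnoeth : WellFounded (fun w₁ w₂ : List G => MStep R w₂ w₁))
    (w : List G) : ∃ u, ReflTransGen (MStep R) w u ∧ ∀ s, ¬ MStep R u s := by
  induction w using WellFounded.induction hnoeth with
  | _ w ih =>
    by_cases h : ∃ u, MStep R w u
    · obtain ⟨u, hu⟩ := h
      obtain ⟨s, hs1, hs2⟩ := ih u hu
      exact ⟨s, .head hu hs1, hs2⟩
    · exact ⟨w, .refl, fun s hs => h ⟨s, hs⟩⟩

theorem pops (hnoeth : WellFounded (fun w₁ w₂ : List G => MStep R w₂ w₁)) :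
    ∀ (n : ℕ) (w : List G) (x₀ : X), w.length ≤ n → (∀ u, ¬ MStep R w u) →
    ∃ v y, ReflTransGen (PStep R act) (w, x₀) (v, y) ∧
      ∀ q', ¬ PStep R act (v, y) q' := by
  intro n
  induction n with
  | zero =>
    intro w x₀ hlen hnorm
    have hw : w = [] := by simpa using List.length_eq_zero_iff.mp (Nat.le_zero.mp hlen)
    subst hw
    exact ⟨[], x₀, .refl, nil_normal hnoeth x₀⟩
  | succ n ih =>
    intro w x₀ hlen hnorm
    by_cases h : ∃ w' g y, w = w' ++ [g] ∧ act g x₀ = some y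
    · obtain ⟨w', g, y, rfl, hy⟩ := h
      have hnorm' : ∀ u, ¬ MStep R w' u := fun u hu =>
        hnorm (u ++ [g]) (mstep_append_right hu)
      have hlen' : w'.length ≤ n := by
        simp at hlen; omega
      obtain ⟨v, z, h1, h2⟩ := ih w' y hlen' hnorm'
      exact ⟨v, z, .head (Or.inr ⟨w', g, y, rfl, hy, rfl, rfl⟩) h1, h2⟩
    · refine ⟨w, x₀, .refl, ?_⟩
      rintro q' (⟨hm, -⟩ | ⟨w', g, y, h1, h2, -, -⟩)
      · exact hnorm _ hm
      · exact h ⟨w', g, y, h1, h2⟩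

theorem pnormal_form (hnoeth : WellFounded (fun w₁ w₂ : List G => MStep R w₂ w₁))
    (w : List G) (x₀ : X) :
    ∃ v y, ReflTransGen (PStep R act) (w, x₀) (v, y) ∧
      ∀ q', ¬ PStep R act (v, y) q' := by
  obtain ⟨u, hu1, hu2⟩ := mstep_normal_form hnoeth w
  obtain ⟨v, y, h1, h2⟩ := pops hnoeth u.length u x₀ le_rfl hu2
  exact ⟨v, y, (pstep_rt_of_mstep_rt hu1).trans h1, h2⟩

end Aux2

section Topo
open Relation TopologicalSpace
variable {G X : Type*} {R : List G → List G → Prop} {act : G → X → Option X}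

theorem rt_normal_eq {α : Type*} {r : α → α → Prop} {q t : α}
    (hq : ∀ q', ¬ r q q') (h : ReflTransGen r q t) : t = q := by
  induction h using ReflTransGen.head_induction_on with
  | refl => rfl
  | head h' _ _ => exact absurd h' (hq _)

theorem continuous_mk [t : TopologicalSpace X] (w : List G) :
    Continuous (fun x : X => PGlob.mk R act (w, x)) := by
  rw [continuous_iff_coinduced_le]
  exact le_iSup (fun w => coinduced (fun x : X => PGlob.mk R act (w, x)) t) w

theorem isClosed_pglob [t : TopologicalSpace X] {s : Set (PGlob R act)}
    (h : ∀ w : List G, IsClosed ((fun x' : X => PGlob.mk R act (w, x')) ⁻¹' s)) :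
    IsClosed s := by
  rw [← isOpen_compl_iff]
  refine isOpen_iSup_iff.mpr fun w => ?_
  rw [isOpen_coinduced]
  rw [Set.preimage_compl]
  exact (h w).isOpen_compl

end Topo


/-- For a confluent continuous partial action of a monoid `M` on a T1 space
`X`, the topological globalization `Y` is T1 iff `u⁻¹[{x}]` is closed in `X`
for every `u ∈ M` (represented by a word `w`) and every `x ∈ X`; here
`u⁻¹[{x}] = {x' | u·x' is defined and equal to x}`, definedness being
reduction of `(w, x')` to a point of `X`. -/
theorem stmt_12 {G X : Type*} [TopologicalSpace X] [T1Space X]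
    (R : List G → List G → Prop) (act : G → X → Option X)
    (hnoeth : WellFounded (fun w₁ w₂ : List G => MStep R w₂ w₁))
    (hconfM : ∀ w s₁ s₂ : List G, Relation.ReflTransGen (MStep R) w s₁ →
      Relation.ReflTransGen (MStep R) w s₂ →
      ∃ t, Relation.ReflTransGen (MStep R) s₁ t ∧ Relation.ReflTransGen (MStep R) s₂ t)
    (hnosingle : ∀ (g : G) (r : List G), ¬ R [g] r)
    (hconfP : ∀ p q₁ q₂ : List G × X, Relation.ReflTransGen (PStep R act) p q₁ →
      Relation.ReflTransGen (PStep R act) p q₂ →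
      ∃ t, Relation.ReflTransGen (PStep R act) q₁ t ∧
        Relation.ReflTransGen (PStep R act) q₂ t)
    (hcont : ∀ g : G, ContinuousOn (fun x => (act g x).getD x) {x | (act g x).isSome}) :
    T1Space (PGlob R act) ↔
      ∀ (w : List G) (x : X),
        IsClosed {x' : X | Relation.ReflTransGen (PStep R act) (w, x') ([], x)} := by
  classical
  open Relation in
  have hjoin : ∀ a b : List G × X, (PGlob.mk R act a = PGlob.mk R act b) ↔
      Join (ReflTransGen (PStep R act)) a b := by
    intro a b
    unfold PGlob.mk
    change (Quot.mk _ a : Quot (EqvGen (PStep R act))) = Quot.mk _ b ↔ _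
    rw [Quot.eq, Equivalence.eqvGen_iff (Relation.EqvGen.is_equivalence _)]
    exact eqvGen_iff_join hconfP
  constructor
  · intro ht w x
    have hset : {x' : X | Relation.ReflTransGen (PStep R act) (w, x') ([], x)} =
        (fun x' : X => PGlob.mk R act (w, x')) ⁻¹' {PGlob.mk R act ([], x)} := by
      ext x'
      simp only [Set.mem_setOf_eq, Set.mem_preimage, Set.mem_singleton_iff]
      rw [hjoin]
      constructor
      · intro h; exact ⟨_, h, .refl⟩
      · rintro ⟨d, h1, h2⟩
        rw [rt_normal_eq (nil_normal hnoeth x) h2] at h1; exact h1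
    rw [hset]
    exact isClosed_singleton.preimage (continuous_mk w)
  · intro hcl
    refine ⟨fun a => ?_⟩
    induction a using Quot.ind with
    | _ q₀ =>
    obtain ⟨v, x, hnf, hnorm⟩ := pnormal_form hnoeth q₀.1 q₀.2
    apply isClosed_pglob
    intro w
    obtain ⟨u, hu1, hu2⟩ := mstep_normal_form hnoeth w
    have key : ((fun x' : X => PGlob.mk R act (w, x')) ⁻¹' @singleton (PGlob R act) (Set (PGlob R act)) _ (Quot.mk _ q₀)) =
        {x' : X | Relation.ReflTransGen (PStep R act) (u, x') (v, x)} := by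
      ext x'
      simp only [Set.mem_preimage, Set.mem_singleton_iff, Set.mem_setOf_eq]
      change PGlob.mk R act (w, x') = PGlob.mk R act q₀ ↔ _
      rw [hjoin]
      constructor
      · rintro ⟨d, h1, h2⟩
        obtain ⟨e, he1, he2⟩ := hconfP q₀ d (v, x) h2 ((Prod.mk.eta (p := q₀)) ▸ hnf)
        have he : e = (v, x) := rt_normal_eq hnorm he2
        subst he
        obtain ⟨e', f1, f2⟩ := hconfP (w, x') (v, x) (u, x') (h1.trans he1)
          (pstep_rt_of_mstep_rt hu1)
        have he' : e' = (v, x) := rt_normal_eq hnorm f1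
        subst he'
        exact f2
      · intro h
        exact ⟨(v, x), (pstep_rt_of_mstep_rt hu1).trans h,
          (Prod.mk.eta (p := q₀)) ▸ hnf⟩
    change IsClosed ((fun x' : X => PGlob.mk R act (w, x')) ⁻¹' @singleton (PGlob R act) (Set (PGlob R act)) _ (Quot.mk _ q₀))
    rw [key]
    by_cases hp : ∃ p, u = v ++ p
    · obtain ⟨p, rfl⟩ := hp
      have heq : {x' : X | Relation.ReflTransGen (PStep R act) (v ++ p, x') (v, x)} =
          {x' : X | Relation.ReflTransGen (PStep R act) (p, x') ([], x)} := by
        ext x'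
        simp only [Set.mem_setOf_eq]
        constructor
        · intro h
          obtain ⟨p', h1, h2⟩ := reach_decomp (q := (v ++ p, x')) h
          have : v ++ p' = v ++ p := rt_normal_eq hu2 h1
          have hpp : p' = p := by
            have := List.append_cancel_left this
            exact this
          rwa [hpp] at h2
        · intro h
          exact reach_comp .refl h
      rw [heq]
      exact hcl p x
    · convert isClosed_empty
      ext x'
      simp only [Set.mem_setOf_eq, Set.mem_empty_iff_false, iff_false]
      intro h
      obtain ⟨p', h1, -⟩ := reach_decomp (q := (u, x')) h
      exact hp ⟨p', (rt_normal_eq hu2 h1).symm⟩
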